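/- Let R, K_ℓ, K_R be smooth with R > 0 near a point ℓ*, set H = 2R'/R, θ⁺ = 2K_R + H, trK = K_ℓ + 2K_R, and suppose there is an EVEN integer j ≥ 2 with θ⁺(ℓ*) = ∂_ℓθ⁺(ℓ*) = ⋯ = ∂_ℓ^{j−1}θ⁺(ℓ*) = 0 and ∂_ℓ^{j}θ⁺(ℓ*) > 0. If k is a smooth solution of ∂_ℓ k = −K_ℓ k² − H k + trK near ℓ* with k(ℓ*) = −1, then ∂_ℓ k(ℓ*) = ⋯ = ∂_ℓ^{j} k(ℓ*) = 0 and ∂_ℓ^{j+1} k(ℓ*) > 0, and consequently there is ε > 0 with k(ℓ) < −1 for all ℓ ∈ (ℓ* − ε, ℓ*). -/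

import Mathlib

open Filter Asymptotics Set Topology

/-- Mean curvature `H = 2 R' / R` of the spherically symmetric spheres. -/
noncomputable def Hf (R : ℝ → ℝ) : ℝ → ℝ := fun ℓ => 2 * deriv R ℓ / R ℓ

/-- `trK = K_ℓ + 2 K_R`. -/
def trKf (Kl KR : ℝ → ℝ) : ℝ → ℝ := fun ℓ => Kl ℓ + 2 * KR ℓ

/-- Outer expansion `θ⁺ = 2 K_R + H`. -/
noncomputable def thetaPlus (R KR : ℝ → ℝ) : ℝ → ℝ := fun ℓ => 2 * KR ℓ + Hf R ℓ

lemma iDW_eq {U : Set ℝ} (hU : IsOpen U) {x : ℝ} (hx : x ∈ U) (n : ℕ) (f : ℝ → ℝ) :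
    iteratedDerivWithin n f U x = iteratedDeriv n f x := by
  rw [iteratedDerivWithin_eq_iteratedFDerivWithin, iteratedDeriv_eq_iteratedFDeriv,
    iteratedFDerivWithin_of_isOpen n hU hx]

lemma iD_add {U : Set ℝ} (hU : IsOpen U) {x : ℝ} (hx : x ∈ U) (n : ℕ) {f g : ℝ → ℝ}
    (hf : ContDiffOn ℝ (⊤ : ℕ∞) f U) (hg : ContDiffOn ℝ (⊤ : ℕ∞) g U) :
    iteratedDeriv n (fun y => f y + g y) x = iteratedDeriv n f x + iteratedDeriv n g x := by
  rw [← iDW_eq hU hx n f, ← iDW_eq hU hx n g, ← iDW_eq hU hx n (fun y => f y + g y)]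
  exact iteratedDerivWithin_add hx hU.uniqueDiffOn ((hf.of_le (by exact_mod_cast le_top)).contDiffWithinAt hx)
    ((hg.of_le (by exact_mod_cast le_top)).contDiffWithinAt hx)

lemma deriv_smooth {U : Set ℝ} (hU : IsOpen U) {f : ℝ → ℝ}
    (hf : ContDiffOn ℝ (⊤ : ℕ∞) f U) : ContDiffOn ℝ (⊤ : ℕ∞) (deriv f) U :=
  hf.deriv_of_isOpen hU (by simp)

lemma iD_contOn {U : Set ℝ} (hU : IsOpen U) (n : ℕ) {f : ℝ → ℝ}
    (hf : ContDiffOn ℝ (⊤ : ℕ∞) f U) : ContinuousOn (iteratedDeriv n f) U :=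
  (hf.continuousOn_iteratedDerivWithin (by exact_mod_cast le_top) hU.uniqueDiffOn).congr
    (fun x hx => (iDW_eq hU hx n f).symm)

lemma mul_vanish {U : Set ℝ} (hU : IsOpen U) {x : ℝ} (hx : x ∈ U) :
    ∀ (i : ℕ) (g f : ℝ → ℝ), ContDiffOn ℝ (⊤ : ℕ∞) g U → ContDiffOn ℝ (⊤ : ℕ∞) f U →
    (∀ m ≤ i, iteratedDeriv m f x = 0) →
    iteratedDeriv i (fun y => g y * f y) x = 0 := by
  intro i
  induction i with
  | zero =>
    intro g f hg hf h0
    simp only [iteratedDeriv_zero, mul_eq_zero]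
    right; exact h0 0 le_rfl
  | succ i IH =>
    intro g f hg hf h0
    rw [iteratedDeriv_succ']
    have hev : deriv (fun y => g y * f y) =ᶠ[𝓝 x]
        fun y => (deriv g y * f y) + (g y * deriv f y) := by
      filter_upwards [hU.mem_nhds hx] with y hy
      have hgd : DifferentiableAt ℝ g y :=
        (hg.contDiffAt (hU.mem_nhds hy)).differentiableAt (by simp)
      have hfd : DifferentiableAt ℝ f y :=
        (hf.contDiffAt (hU.mem_nhds hy)).differentiableAt (by simp)
      exact deriv_mul hgd hfd
    rw [hev.iteratedDeriv_eq i,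
      iD_add hU hx i ((deriv_smooth hU hg).mul hf) (hg.mul (deriv_smooth hU hf))]
    have h1 : iteratedDeriv i (fun y => deriv g y * f y) x = 0 :=
      IH (deriv g) f (deriv_smooth hU hg) hf
        (fun m hm => h0 m (hm.trans (Nat.le_succ i)))
    have h2 : iteratedDeriv i (fun y => g y * deriv f y) x = 0 := by
      refine IH g (deriv f) hg (deriv_smooth hU hf) (fun m hm => ?_)
      rw [← iteratedDeriv_succ']
      exact h0 (m + 1) (Nat.succ_le_succ hm)
    rw [h1, h2, add_zero]

/-- At a MOTS `ℓ*` where `θ⁺` vanishes to order `j − 1` and `∂_ℓ^j θ⁺(ℓ*) > 0` for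
an EVEN `j ≥ 2`, any smooth solution `k` of the reduced Jang equation near `ℓ*` with
`k(ℓ*) = −1` has `∂_ℓ k(ℓ*) = ⋯ = ∂_ℓ^j k(ℓ*) = 0` and `∂_ℓ^{j+1} k(ℓ*) > 0`;
consequently `k < −1` just to the left of `ℓ*`. -/
theorem jang_drops_below_left_of_even_order_mots (R Kl KR k : ℝ → ℝ) (U : Set ℝ)
    (hU : IsOpen U) (ℓs : ℝ) (hℓs : ℓs ∈ U)
    (hR : ContDiffOn ℝ (⊤ : ℕ∞) R U)
    (hKl : ContDiffOn ℝ (⊤ : ℕ∞) Kl U)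
    (hKR : ContDiffOn ℝ (⊤ : ℕ∞) KR U)
    (hRpos : ∀ ℓ ∈ U, 0 < R ℓ)
    (j : ℕ) (hj : 2 ≤ j) (hjeven : Even j)
    (hθlow : ∀ i < j, iteratedDeriv i (thetaPlus R KR) ℓs = 0)
    (hθj : 0 < iteratedDeriv j (thetaPlus R KR) ℓs)
    (hk : ContDiffOn ℝ (⊤ : ℕ∞) k U)
    (hode : ∀ ℓ ∈ U, deriv k ℓ = -(Kl ℓ) * k ℓ ^ 2 - Hf R ℓ * k ℓ + trKf Kl KR ℓ)
    (hkval : k ℓs = -1) :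
    (∀ i, 1 ≤ i → i ≤ j → iteratedDeriv i k ℓs = 0) ∧
    0 < iteratedDeriv (j + 1) k ℓs ∧
    ∃ ε > 0, ∀ ℓ ∈ Set.Ioo (ℓs - ε) ℓs, k ℓ < -1 := by
  set θ : ℝ → ℝ := thetaPlus R KR with hθdef
  set w : ℝ → ℝ := fun ℓ => k ℓ + 1 with hwdef
  set a : ℝ → ℝ := fun ℓ => Kl ℓ * (1 - k ℓ) - Hf R ℓ with hadef
  -- smoothness
  have hH : ContDiffOn ℝ (⊤ : ℕ∞) (Hf R) U := by
    have : ContDiffOn ℝ (⊤ : ℕ∞) (fun ℓ => 2 * deriv R ℓ / R ℓ) U :=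
      (contDiffOn_const.mul (deriv_smooth hU hR)).div hR (fun x hx => (hRpos x hx).ne')
    exact this
  have hθs : ContDiffOn ℝ (⊤ : ℕ∞) θ U := by
    have : ContDiffOn ℝ (⊤ : ℕ∞) (fun ℓ => 2 * KR ℓ + Hf R ℓ) U :=
      (contDiffOn_const.mul hKR).add hH
    exact this
  have hws : ContDiffOn ℝ (⊤ : ℕ∞) w U := hk.add contDiffOn_const
  have has : ContDiffOn ℝ (⊤ : ℕ∞) a U := (hKl.mul (contDiffOn_const.sub hk)).sub hH
  -- the ODE for w
  have hderiv_wk : deriv w = deriv k := by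
    funext y
    exact deriv_add_const 1
  have hwode : ∀ ℓ ∈ U, deriv w ℓ = a ℓ * w ℓ + θ ℓ := by
    intro ℓ hℓ
    rw [hderiv_wk, hode ℓ hℓ]
    simp only [hθdef, hadef, hwdef, thetaPlus, trKf]
    ring
  have hev : deriv w =ᶠ[𝓝 ℓs] fun y => a y * w y + θ y := by
    filter_upwards [hU.mem_nhds hℓs] with y hy using hwode y hy
  -- vanishing of derivatives of w up to order j
  have hwvan : ∀ i, i ≤ j → iteratedDeriv i w ℓs = 0 := by
    intro i
    induction i using Nat.strong_induction_on with
    | _ i IH =>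
      intro hij
      match i with
      | 0 => simp [hwdef, hkval]
      | (m + 1) =>
        rw [iteratedDeriv_succ', hev.iteratedDeriv_eq m,
          iD_add hU hℓs m (has.mul hws) hθs]
        have h1 : iteratedDeriv m (fun y => a y * w y) ℓs = 0 := by
          refine mul_vanish hU hℓs m a w has hws (fun m' hm' => ?_)
          exact IH m' (Nat.lt_succ_of_le hm') (le_trans (hm'.trans (Nat.le_succ m)) hij)
        rw [h1, hθlow m (Nat.lt_of_succ_le hij), add_zero]
  -- key positivity at order j+1
  have hwkey : iteratedDeriv (j + 1) w ℓs = iteratedDeriv j θ ℓs := by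
    rw [iteratedDeriv_succ', hev.iteratedDeriv_eq j, iD_add hU hℓs j (has.mul hws) hθs,
      mul_vanish hU hℓs j a w has hws (fun m hm => hwvan m hm), zero_add]
  have hwpos : 0 < iteratedDeriv (j + 1) w ℓs := by rw [hwkey]; exact hθj
  -- transfer to k
  have hkw : ∀ m : ℕ, iteratedDeriv (m + 1) k = iteratedDeriv (m + 1) w := by
    intro m
    rw [iteratedDeriv_succ', iteratedDeriv_succ', hderiv_wk]
  refine ⟨?_, ?_, ?_⟩
  · intro i h1i hij
    obtain ⟨m, rfl⟩ := Nat.exists_eq_add_of_le h1i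
    rw [Nat.add_comm 1 m, hkw m]
    exact hwvan (m + 1) (by omega)
  · rw [hkw j]; exact hwpos
  · -- find δ with positivity and inclusion
    have hcont : ContinuousAt (iteratedDeriv (j + 1) w) ℓs :=
      (iD_contOn hU (j + 1) hws).continuousAt (hU.mem_nhds hℓs)
    have hevpos : ∀ᶠ y in 𝓝 ℓs, 0 < iteratedDeriv (j + 1) w y ∧ y ∈ U := by
      filter_upwards [hcont.eventually (eventually_gt_nhds hwpos),
        hU.mem_nhds hℓs] with y h1 h2 using ⟨h1, h2⟩
    obtain ⟨ε, hε, hball⟩ := Metric.eventually_nhds_iff.mp hevpos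
    set δ := ε / 2 with hδdef
    have hδ : 0 < δ := by positivity
    have hIccU : Icc (ℓs - δ) ℓs ⊆ U := by
      intro y hy
      refine (hball ?_).2
      rw [Real.dist_eq, abs_lt]
      constructor <;> [skip; skip] <;>
        (obtain ⟨h1, h2⟩ := hy; simp only [hδdef] at h1 h2 ⊢; linarith)
    have hIccPos : ∀ y ∈ Icc (ℓs - δ) ℓs, 0 < iteratedDeriv (j + 1) w y := by
      intro y hy
      refine (hball ?_).1
      rw [Real.dist_eq, abs_lt]
      obtain ⟨h1, h2⟩ := hy
      constructor <;> (simp only [hδdef] at h1 h2 ⊢; linarith)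
    have hlt : ℓs - δ < ℓs := by linarith
    have hℓsIcc : ℓs ∈ Icc (ℓs - δ) ℓs := right_mem_Icc.mpr hlt.le
    -- cascade
    have casc : ∀ m : ℕ, m ≤ j + 1 →
        (Even m → ∀ x ∈ Ioo (ℓs - δ) ℓs, 0 < iteratedDeriv (j + 1 - m) w x) ∧
        (Odd m → ∀ x ∈ Ioo (ℓs - δ) ℓs, iteratedDeriv (j + 1 - m) w x < 0) := by
      intro m
      induction m with
      | zero =>
        intro _
        refine ⟨fun _ x hx => ?_, fun h => absurd h (by simp)⟩
        exact hIccPos x ⟨hx.1.le, hx.2.le⟩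
      | succ m IH =>
        intro hm
        obtain ⟨IHe, IHo⟩ := IH (Nat.le_of_succ_le hm)
        have hn1 : j + 1 - m = (j + 1 - (m + 1)) + 1 := by omega
        set n := j + 1 - (m + 1) with hndef
        have hnj : n ≤ j := by rw [hndef, Nat.succ_sub_succ]; exact Nat.sub_le j m
        have hzero : iteratedDeriv n w ℓs = 0 := hwvan n hnj
        have hcontIcc : ContinuousOn (iteratedDeriv n w) (Icc (ℓs - δ) ℓs) :=
          (iD_contOn hU n hws).mono hIccU
        constructor
        · intro hevm
          have hom : Odd m := Nat.not_even_iff_odd.mp (Nat.even_add_one.mp hevm)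
          have hanti : StrictAntiOn (iteratedDeriv n w) (Icc (ℓs - δ) ℓs) := by
            refine strictAntiOn_of_deriv_neg (convex_Icc _ _) hcontIcc (fun x hx => ?_)
            rw [interior_Icc] at hx
            rw [← iteratedDeriv_succ, ← hn1]
            exact IHo hom x hx
          intro x hx
          have := hanti ⟨hx.1.le, hx.2.le⟩ hℓsIcc hx.2
          rw [hzero] at this
          exact this
        · intro hom1
          have hem : Even m := by
            rcases Nat.even_or_odd m with h | h
            · exact h
            · exact absurd hom1 (by simp [Nat.even_add_one, Nat.odd_iff, Nat.even_iff] at *; omega)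
          have hmono : StrictMonoOn (iteratedDeriv n w) (Icc (ℓs - δ) ℓs) := by
            refine strictMonoOn_of_deriv_pos (convex_Icc _ _) hcontIcc (fun x hx => ?_)
            rw [interior_Icc] at hx
            rw [← iteratedDeriv_succ, ← hn1]
            exact IHe hem x hx
          intro x hx
          have := hmono ⟨hx.1.le, hx.2.le⟩ hℓsIcc hx.2
          rw [hzero] at this
          exact this
    have hfinal := (casc (j + 1) le_rfl).2 (Even.add_one hjeven)
    refine ⟨δ, hδ, fun ℓ hℓ => ?_⟩
    have := hfinal ℓ hℓ
    simp only [Nat.sub_self, iteratedDeriv_zero, hwdef] at this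
    linarith
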